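/- Let x ∈ ℝⁿ have all entries nonzero, and let y be a random vector in ℝⁿ (each y_i square-integrable) with E[y_i²] = υ for all i and ⟨x,y⟩² integrable. Then the map p ↦ E_y[Var_{i∼D_x^{(p)}}(‖x‖_p^p·Z_p(i))], where Z_p(i) := sgn(x_i)|x_i|^{1−p} y_i, attains its minimum over p ∈ ℝ at p = 1; i.e., for every p ∈ ℝ, E_y[Var_{i∼D_x^{(p)}}(‖x‖_p^p Z_p(i))] ≥ E_y[Var_{i∼D_x^{(1)}}(‖x‖_1 Z_1(i))]. -/

import Mathlib

open Finset MeasureTheory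

/-- The average (over `y`) variance of the rescaled importance-sampling estimator
`‖x‖_p^p · Z_p(i)` is minimized at `p = 1` when the entries of `y` have equal
second-order moments. -/
theorem stmt_3 {n : ℕ} (x : Fin n → ℝ) (hx : ∀ i, x i ≠ 0)
    {Ω : Type*} [MeasurableSpace Ω] (μ : Measure Ω) [IsProbabilityMeasure μ]
    (y : Ω → Fin n → ℝ) (υ : ℝ)
    (hmeas : ∀ i, Measurable fun ω => y ω i)
    (hy2int : ∀ i, Integrable (fun ω => (y ω i) ^ 2) μ)
    (hy2 : ∀ i, ∫ ω, (y ω i) ^ 2 ∂μ = υ)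
    (hxyint : Integrable (fun ω => (∑ i, x i * y ω i) ^ 2) μ)
    (p : ℝ) :
    ∫ ω,
        ((∑ i, (|x i| ^ p / (∑ k, |x k| ^ p)) *
            ((∑ k, |x k| ^ p) * (Real.sign (x i) * |x i| ^ (1 - p) * y ω i)) ^ 2)
          - (∑ i, (|x i| ^ p / (∑ k, |x k| ^ p)) *
              ((∑ k, |x k| ^ p) * (Real.sign (x i) * |x i| ^ (1 - p) * y ω i))) ^ 2) ∂μ
      ≥ ∫ ω,
          ((∑ i, (|x i| ^ (1 : ℝ) / (∑ k, |x k| ^ (1 : ℝ))) *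
              ((∑ k, |x k| ^ (1 : ℝ)) *
                (Real.sign (x i) * |x i| ^ (1 - (1 : ℝ)) * y ω i)) ^ 2)
            - (∑ i, (|x i| ^ (1 : ℝ) / (∑ k, |x k| ^ (1 : ℝ))) *
                ((∑ k, |x k| ^ (1 : ℝ)) *
                  (Real.sign (x i) * |x i| ^ (1 - (1 : ℝ)) * y ω i))) ^ 2) ∂μ := by
  rcases Nat.eq_zero_or_pos n with hn | hn
  · subst hn; simp
  have hne : (Finset.univ : Finset (Fin n)).Nonempty := ⟨⟨0, hn⟩, Finset.mem_univ _⟩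
  have habs : ∀ i, (0:ℝ) < |x i| := fun i => abs_pos.mpr (hx i)
  have hsgn : ∀ i, Real.sign (x i) ^ 2 = 1 := by
    intro i
    rcases (hx i).lt_or_gt with h | h
    · rw [Real.sign_of_neg h]; ring
    · rw [Real.sign_of_pos h]; ring
  have hSpos : ∀ q : ℝ, 0 < ∑ k, |x k| ^ q := fun q =>
    Finset.sum_pos (fun i _ => Real.rpow_pos_of_pos (habs i) q) hne
  have key : ∀ q : ℝ, ∀ ω : Ω,
      ((∑ i, (|x i| ^ q / (∑ k, |x k| ^ q)) *
          ((∑ k, |x k| ^ q) * (Real.sign (x i) * |x i| ^ (1 - q) * y ω i)) ^ 2)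
        - (∑ i, (|x i| ^ q / (∑ k, |x k| ^ q)) *
            ((∑ k, |x k| ^ q) * (Real.sign (x i) * |x i| ^ (1 - q) * y ω i))) ^ 2)
      = ((∑ k, |x k| ^ q) * ∑ i, |x i| ^ (2 - q) * (y ω i) ^ 2)
          - (∑ i, x i * y ω i) ^ 2 := by
    intro q ω
    have hS := (hSpos q).ne'
    congr 1
    · rw [Finset.mul_sum]
      refine Finset.sum_congr rfl fun i _ => ?_
      have h2 : |x i| ^ q * (|x i| ^ (1 - q)) ^ 2 = |x i| ^ (2 - q) := by
        rw [sq, ← Real.rpow_add (habs i), ← Real.rpow_add (habs i)]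
        ring_nf
      have hc : (0:ℝ) < ∑ k, |x k| ^ q := hSpos q
      field_simp
      rw [hsgn i]
      linear_combination (y ω i ^ 2) * h2
    · congr 1
      refine Finset.sum_congr rfl fun i _ => ?_
      have h1 : |x i| ^ q * |x i| ^ (1 - q) = |x i| := by
        rw [← Real.rpow_add (habs i)]; norm_num
      have hsx : Real.sign (x i) * |x i| = x i := by
        rcases (hx i).lt_or_gt with h | h
        · rw [Real.sign_of_neg h, abs_of_neg h]; ring
        · rw [Real.sign_of_pos h, abs_of_pos h]; ring
      field_simp
      linear_combination (Real.sign (x i) * y ω i) * h1 + y ω i * hsx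
  have hint1 : ∀ q : ℝ, Integrable
      (fun ω => (∑ k, |x k| ^ q) * ∑ i, |x i| ^ (2 - q) * (y ω i) ^ 2) μ := fun q =>
    (integrable_finset_sum _ (fun i _ => (hy2int i).const_mul _)).const_mul _
  have hval : ∀ q : ℝ,
      (∫ ω, ((∑ i, (|x i| ^ q / (∑ k, |x k| ^ q)) *
          ((∑ k, |x k| ^ q) * (Real.sign (x i) * |x i| ^ (1 - q) * y ω i)) ^ 2)
        - (∑ i, (|x i| ^ q / (∑ k, |x k| ^ q)) *
            ((∑ k, |x k| ^ q) * (Real.sign (x i) * |x i| ^ (1 - q) * y ω i))) ^ 2) ∂μ)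
      = (∑ k, |x k| ^ q) * (∑ i, |x i| ^ (2 - q)) * υ
          - ∫ ω, (∑ i, x i * y ω i) ^ 2 ∂μ := by
    intro q
    simp_rw [key q]
    rw [integral_sub (hint1 q) hxyint]
    congr 1
    rw [integral_const_mul, integral_finset_sum _ (fun i _ => (hy2int i).const_mul _)]
    simp_rw [integral_const_mul, hy2]
    rw [← Finset.sum_mul, mul_assoc]
  rw [hval p, hval 1]
  have hυ : 0 ≤ υ := by
    rw [← hy2 ⟨0, hn⟩]
    exact integral_nonneg fun ω => sq_nonneg _
  have hcs : (∑ k, |x k| ^ (1:ℝ)) * (∑ i, |x i| ^ (2 - (1:ℝ)))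
      ≤ (∑ k, |x k| ^ p) * (∑ i, |x i| ^ (2 - p)) := by
    have h := Finset.sum_mul_sq_le_sq_mul_sq Finset.univ
      (fun i => |x i| ^ (p / 2)) (fun i => |x i| ^ ((2 - p) / 2))
    have e1 : ∀ i : Fin n, |x i| ^ (p / 2) * |x i| ^ ((2 - p) / 2) = |x i| ^ (1:ℝ) := by
      intro i
      rw [← Real.rpow_add (habs i), show p / 2 + (2 - p) / 2 = (1:ℝ) by ring]
    have e2 : ∀ i : Fin n, (|x i| ^ (p / 2)) ^ 2 = |x i| ^ p := by
      intro i
      rw [sq, ← Real.rpow_add (habs i), show p / 2 + p / 2 = p by ring]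
    have e3 : ∀ i : Fin n, (|x i| ^ ((2 - p) / 2)) ^ 2 = |x i| ^ (2 - p) := by
      intro i; rw [sq, ← Real.rpow_add (habs i)]; norm_num
    simp_rw [e1, e2, e3] at h
    have e4 : (∑ i : Fin n, |x i| ^ (2 - (1:ℝ))) = ∑ i : Fin n, |x i| ^ (1:ℝ) := by
      norm_num
    rw [e4, ← sq]
    exact h
  have := mul_le_mul_of_nonneg_right hcs hυ
  linarith
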